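/- Let R be an integral domain and let A = [[a, b],[c, A']] ∈ R^{n×n} be a block matrix with a ∈ R, b a nonzero row vector, c a nonzero column vector in R^{n-1}, A' ∈ R^{(n-1)×(n-1)}, and det A ≠ 0, det A' ≠ 0. Then A is linked (in one step) to a block diagonal matrix diag(λ, B') for some nonzero λ ∈ R and B' ∈ R^{(n-1)×(n-1)}; i.e., there exists such B with A·B^t equivalent to a symmetric matrix of nonzero determinant. -/
import Mathlib


open Matrix

lemma exists_symm_mulVec {R : Type} [CommRing R] [IsDomain R] {m : ℕ}
    (u c : Fin m → R) (hu : u ≠ 0) (hc : c ≠ 0) :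
    ∃ S : Matrix (Fin m) (Fin m) R, S.IsSymm ∧ S.det ≠ 0 ∧
      ∃ l : R, l ≠ 0 ∧ S.mulVec u = l • c := by
  classical
  obtain ⟨i, hui⟩ : ∃ i, u i ≠ 0 := by
    by_contra h; push_neg at h; exact hu (funext h)
  by_cases hex : ∃ j, j ≠ i ∧ c j ≠ 0
  · -- case (b): some j₀ ≠ i with c j₀ ≠ 0
    obtain ⟨j₀, hj₀, hcj₀⟩ := hex
    set σ : R := ∑ k, (if k = i then 0 else if k = j₀ then c k * u k
      else (c k - u k) * u k) with hσ
    set w : Fin m → R := fun j => if j = i then u i * c i - σ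
      else if j = j₀ then u i * c j₀ else u i * (c j - u j) with hw
    set S : Matrix (Fin m) (Fin m) R := Matrix.of (fun j k =>
      if j = i then w k else if k = i then w j
      else if j = k then (if j = j₀ then 0 else u i * u i) else 0) with hS
    have hSapp : ∀ j k, S j k = if j = i then w k else if k = i then w j
        else if j = k then (if j = j₀ then 0 else u i * u i) else 0 := fun _ _ => rfl
    have hwj₀ : w j₀ = u i * c j₀ := by simp [hw, hj₀]
    have hwi : w i = u i * c i - σ := by simp [hw]
    have hwo : ∀ k, k ≠ i → k ≠ j₀ → w k = u i * (c k - u k) := by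
      intro k h1 h2; simp [hw, h1, h2]
    have hsymm : S.IsSymm := by
      show Sᵀ = S
      ext j k
      rw [Matrix.transpose_apply, hSapp, hSapp]
      by_cases h1 : j = i
      · by_cases h2 : k = i
        · simp [h1, h2]
        · simp [h1, h2]
      · by_cases h2 : k = i
        · simp [h1, h2]
        · by_cases h3 : j = k
          · simp [h1, h2, h3]
          · simp [h1, h2, h3, Ne.symm h3]
    have hrowgen : ∀ (x : Fin m → R) (j), j ≠ i → (∑ k, S j k * x k)
        = w j * x i + (if j = j₀ then 0 else u i * u i) * x j := by
      intro x j hj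
      have e : ∀ k, S j k * x k = (if k = i then w j * x k else 0)
          + (if k = j then (if j = j₀ then 0 else u i * u i) * x k else 0) := by
        intro k
        rw [hSapp, if_neg hj]
        by_cases h2 : k = i
        · rw [if_pos h2, if_pos h2, if_neg (fun hkj : k = j => hj (hkj.symm.trans h2)),
            add_zero]
        · rw [if_neg h2, if_neg h2, zero_add]
          by_cases h3 : j = k
          · rw [if_pos h3, if_pos h3.symm]
          · rw [if_neg h3, if_neg (fun h : k = j => h3 h.symm), zero_mul]
      rw [Finset.sum_congr rfl (fun k _ => e k), Finset.sum_add_distrib,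
        Finset.sum_ite_eq', Finset.sum_ite_eq', if_pos (Finset.mem_univ i),
        if_pos (Finset.mem_univ j)]
    have hrowi : ∀ (x : Fin m → R), (∑ k, S i k * x k) = ∑ k, w k * x k := by
      intro x
      exact Finset.sum_congr rfl (fun k _ => by rw [hSapp, if_pos rfl])
    have hSu : S.mulVec u = (u i * u i) • c := by
      funext j
      have hmv : S.mulVec u j = ∑ k, S j k * u k := by
        simp [Matrix.mulVec, dotProduct]
      rw [hmv, Pi.smul_apply, smul_eq_mul]
      by_cases h1 : j = i
      · rw [h1, hrowi]
        have e2 : ∀ k, w k * u k = (if k = i then (u i * c i - σ) * u i else 0)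
            + u i * (if k = i then 0 else if k = j₀ then c k * u k
              else (c k - u k) * u k) := by
          intro k
          by_cases h2 : k = i
          · rw [h2, hwi, if_pos rfl, if_pos rfl, mul_zero, add_zero]
          · rw [if_neg h2, if_neg h2, zero_add]
            by_cases h3 : k = j₀
            · rw [h3, hwj₀, if_pos rfl]; ring
            · rw [hwo k h2 h3, if_neg h3]; ring
        rw [Finset.sum_congr rfl (fun k _ => e2 k), Finset.sum_add_distrib,
          Finset.sum_ite_eq', if_pos (Finset.mem_univ i), ← Finset.mul_sum, ← hσ]
        ring
      · rw [hrowgen u j h1]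
        by_cases h3 : j = j₀
        · rw [if_pos h3, h3, hwj₀]; ring
        · rw [if_neg h3, hwo j h1 h3]; ring
    have hdet : S.det ≠ 0 := by
      intro h0
      obtain ⟨v, hv, hv0⟩ := Matrix.exists_mulVec_eq_zero_iff.mpr h0
      have hr : ∀ j, (∑ k, S j k * v k) = 0 := by
        intro j
        have := congrFun hv0 j
        simpa [Matrix.mulVec, dotProduct] using this
      have hvi : v i = 0 := by
        have h₁ := hr j₀
        rw [hrowgen v j₀ hj₀, if_pos rfl, zero_mul, add_zero, hwj₀, mul_assoc] at h₁
        rcases mul_eq_zero.mp h₁ with h | h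
        · exact absurd h hui
        · rcases mul_eq_zero.mp h with h' | h'
          · exact absurd h' hcj₀
          · exact h'
      have hvj : ∀ j, j ≠ i → j ≠ j₀ → v j = 0 := by
        intro j hji hjj
        have h₁ := hr j
        rw [hrowgen v j hji, if_neg hjj, hvi, mul_zero, zero_add] at h₁
        rcases mul_eq_zero.mp h₁ with h | h
        · exact absurd h (mul_ne_zero hui hui)
        · exact h
      have hvj₀ : v j₀ = 0 := by
        have h₁ := hr i
        rw [hrowi] at h₁
        rw [Finset.sum_eq_single j₀ (fun k _ hk => ?_)
          (fun h => absurd (Finset.mem_univ j₀) h)] at h₁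
        · rw [hwj₀, mul_assoc] at h₁
          rcases mul_eq_zero.mp h₁ with h | h
          · exact absurd h hui
          · rcases mul_eq_zero.mp h with h' | h'
            · exact absurd h' hcj₀
            · exact h'
        · by_cases hki : k = i
          · rw [hki, hvi, mul_zero]
          · rw [hvj k hki hk, mul_zero]
      apply hv
      funext j
      show v j = 0
      by_cases hji : j = i
      · rw [hji]; exact hvi
      · by_cases hjj : j = j₀
        · rw [hjj]; exact hvj₀
        · exact hvj j hji hjj
    exact ⟨S, hsymm, hdet, u i * u i, mul_ne_zero hui hui, hSu⟩
  · -- case (c): c is supported only at i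
    push_neg at hex
    have hc0 : ∀ j, j ≠ i → c j = 0 := fun j hj => by
      by_contra h; exact h (hex j hj)
    have hci : c i ≠ 0 := by
      intro h
      apply hc
      funext j
      show c j = 0
      by_cases hji : j = i
      · rw [hji]; exact h
      · exact hc0 j hji
    set τ : R := ∑ k, (if k = i then 0 else u k * u k) with hτdef
    set δ : R := if τ = 0 then 1 else 0 with hδ
    have hkey : δ * u i - τ ≠ 0 := by
      by_cases hτ : τ = 0
      · rw [hδ, if_pos hτ, hτ, one_mul, sub_zero]; exact hui
      · rw [hδ, if_neg hτ, zero_mul, zero_sub]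
        exact neg_ne_zero.mpr hτ
    set w : Fin m → R := fun j => if j = i then c i * u i * δ
      else -(c i * (u i * u j)) with hw
    set S : Matrix (Fin m) (Fin m) R := Matrix.of (fun j k =>
      if j = i then w k else if k = i then w j
      else if j = k then c i * (u i * u i) else 0) with hS
    have hSapp : ∀ j k, S j k = if j = i then w k else if k = i then w j
        else if j = k then c i * (u i * u i) else 0 := fun _ _ => rfl
    have hwi : w i = c i * u i * δ := by simp [hw]
    have hwj : ∀ j, j ≠ i → w j = -(c i * (u i * u j)) := fun j hj => by
      simp [hw, hj]
    have hsymm : S.IsSymm := by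
      show Sᵀ = S
      ext j k
      rw [Matrix.transpose_apply, hSapp, hSapp]
      by_cases h1 : j = i
      · by_cases h2 : k = i
        · simp [h1, h2]
        · simp [h1, h2]
      · by_cases h2 : k = i
        · simp [h1, h2]
        · by_cases h3 : j = k
          · simp [h1, h2, h3]
          · simp [h1, h2, h3, Ne.symm h3]
    have hrowgen : ∀ (x : Fin m → R) (j), j ≠ i → (∑ k, S j k * x k)
        = w j * x i + (c i * (u i * u i)) * x j := by
      intro x j hj
      have e : ∀ k, S j k * x k = (if k = i then w j * x k else 0)
          + (if k = j then (c i * (u i * u i)) * x k else 0) := by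
        intro k
        rw [hSapp, if_neg hj]
        by_cases h2 : k = i
        · rw [if_pos h2, if_pos h2, if_neg (fun hkj : k = j => hj (hkj.symm.trans h2)),
            add_zero]
        · rw [if_neg h2, if_neg h2, zero_add]
          by_cases h3 : j = k
          · rw [if_pos h3, if_pos h3.symm]
          · rw [if_neg h3, if_neg (fun h : k = j => h3 h.symm), zero_mul]
      rw [Finset.sum_congr rfl (fun k _ => e k), Finset.sum_add_distrib,
        Finset.sum_ite_eq', Finset.sum_ite_eq', if_pos (Finset.mem_univ i),
        if_pos (Finset.mem_univ j)]
    have hrowi : ∀ (x : Fin m → R), (∑ k, S i k * x k) = ∑ k, w k * x k := by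
      intro x
      exact Finset.sum_congr rfl (fun k _ => by rw [hSapp, if_pos rfl])
    have e2 : ∀ (x : Fin m → R) k, w k * x k = (if k = i then (c i * u i * δ) * x i else 0)
        + (-(c i * u i)) * (if k = i then 0 else u k * x k) := by
      intro x k
      by_cases h2 : k = i
      · rw [h2, hwi, if_pos rfl, if_pos rfl, mul_zero, add_zero]
      · rw [hwj k h2, if_neg h2, if_neg h2, zero_add]; ring
    have hSu : S.mulVec u = (u i * (δ * u i - τ)) • c := by
      funext j
      have hmv : S.mulVec u j = ∑ k, S j k * u k := by
        simp [Matrix.mulVec, dotProduct]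
      rw [hmv, Pi.smul_apply, smul_eq_mul]
      by_cases h1 : j = i
      · rw [h1, hrowi]
        rw [Finset.sum_congr rfl (fun k _ => e2 u k), Finset.sum_add_distrib,
          Finset.sum_ite_eq', if_pos (Finset.mem_univ i), ← Finset.mul_sum, ← hτdef]
        ring
      · rw [hrowgen u j h1, hwj j h1, hc0 j h1]
        ring
    have hdet : S.det ≠ 0 := by
      intro h0
      obtain ⟨v, hv, hv0⟩ := Matrix.exists_mulVec_eq_zero_iff.mpr h0
      have hr : ∀ j, (∑ k, S j k * v k) = 0 := by
        intro j
        have := congrFun hv0 j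
        simpa [Matrix.mulVec, dotProduct] using this
      have hrel : ∀ j, j ≠ i → u i * v j = u j * v i := by
        intro j hj
        have h₁ := hr j
        rw [hrowgen v j hj, hwj j hj] at h₁
        have h₂ : c i * (u i * (u i * v j - u j * v i)) = 0 := by
          linear_combination h₁
        rcases mul_eq_zero.mp h₂ with h | h
        · exact absurd h hci
        · rcases mul_eq_zero.mp h with h' | h'
          · exact absurd h' hui
          · linear_combination h'
      have hvi : v i = 0 := by
        have h₁ := hr i
        rw [hrowi] at h₁
        rw [Finset.sum_congr rfl (fun k _ => e2 v k), Finset.sum_add_distrib,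
          Finset.sum_ite_eq', if_pos (Finset.mem_univ i), ← Finset.mul_sum] at h₁
        set ρ : R := ∑ k, (if k = i then 0 else u k * v k) with hρ
        have h₃ : c i * (u i * (δ * v i - ρ)) = 0 := by linear_combination h₁
        have h₄ : δ * v i = ρ := by
          rcases mul_eq_zero.mp h₃ with h | h
          · exact absurd h hci
          · rcases mul_eq_zero.mp h with h' | h'
            · exact absurd h' hui
            · linear_combination h'
        have h₅ : u i * ρ = τ * v i := by
          rw [hρ, hτdef, Finset.mul_sum, Finset.sum_mul]
          refine Finset.sum_congr rfl (fun k _ => ?_)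
          by_cases hk : k = i
          · rw [if_pos hk, if_pos hk, mul_zero, zero_mul]
          · rw [if_neg hk, if_neg hk]
            have := hrel k hk
            linear_combination u k * this
        have h₆ : (δ * u i - τ) * v i = 0 := by
          have h7 : u i * (δ * v i) = u i * ρ := by rw [h₄]
          rw [h₅] at h7
          linear_combination h7
        rcases mul_eq_zero.mp h₆ with h | h
        · exact absurd h hkey
        · exact h
      apply hv
      funext j
      show v j = 0
      by_cases hji : j = i
      · rw [hji]; exact hvi
      · have := hrel j hji
        rw [hvi, mul_zero] at this
        rcases mul_eq_zero.mp this with h | h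
        · exact absurd h hui
        · exact h
    exact ⟨S, hsymm, hdet, u i * (δ * u i - τ), mul_ne_zero hui hkey, hSu⟩

/-- Two square matrices `A`, `B` are linked in one step if `A ⬝ Bᵀ` is equivalent to a
symmetric matrix whose determinant is a non-zero divisor. -/
def MatrixLinkedOneStep {R : Type} [CommRing R] {n : Type} [Fintype n] [DecidableEq n]
    (A B : Matrix n n R) : Prop :=
  ∃ P Q : Matrix n n R, IsUnit P.det ∧ IsUnit Q.det ∧
    (P * (A * B.transpose) * Q).IsSymm ∧
    (P * (A * B.transpose) * Q).det ∈ nonZeroDivisors R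

/-- Let `R` be an integral domain and `A = [[a, b], [c, A']]` a block
matrix with `b ≠ 0`, `c ≠ 0`, `det A ≠ 0` and `det A' ≠ 0`.  Then `A` is linked in one
step to a block diagonal matrix `diag(λ, B')` with `λ ≠ 0`. -/
theorem block_matrix_linked_to_block_diagonal
    {R : Type} [CommRing R] [IsDomain R] {m : ℕ}
    (a : Matrix (Fin 1) (Fin 1) R) (b : Matrix (Fin 1) (Fin m) R)
    (c : Matrix (Fin m) (Fin 1) R) (A' : Matrix (Fin m) (Fin m) R)
    (hb : b ≠ 0) (hc : c ≠ 0)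
    (hA : (Matrix.fromBlocks a b c A').det ≠ 0) (hA' : A'.det ≠ 0) :
    ∃ (l : R) (B' : Matrix (Fin m) (Fin m) R), l ≠ 0 ∧
      MatrixLinkedOneStep (Matrix.fromBlocks a b c A')
        (Matrix.fromBlocks (l • (1 : Matrix (Fin 1) (Fin 1) R)) 0 0 B') := by
  classical
  set u : Fin m → R := fun k => (b * A'.adjugate) 0 k with hu_def
  have hu : u ≠ 0 := by
    intro h0
    apply hb
    have h1 : b * A'.adjugate = 0 := by
      ext x j
      rw [Subsingleton.elim x 0]
      exact congrFun h0 j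
    have h2 : b * A'.adjugate * A' = 0 := by rw [h1, Matrix.zero_mul]
    rw [Matrix.mul_assoc, Matrix.adjugate_mul, Matrix.mul_smul, Matrix.mul_one] at h2
    ext x j
    have h3 : A'.det * b x j = 0 := by
      have := congrFun (congrFun h2 x) j
      simpa using this
    rcases mul_eq_zero.mp h3 with h | h
    · exact absurd h hA'
    · simpa using h
  set cv : Fin m → R := fun j => c j 0 with hcv_def
  have hcv : cv ≠ 0 := by
    intro h0
    apply hc
    ext j x
    rw [Subsingleton.elim x 0]
    exact congrFun h0 j
  obtain ⟨S, hsym, hdetS, l, hl, hSu⟩ := exists_symm_mulVec u cv hu hcv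
  have hBt : (Matrix.fromBlocks (l • (1 : Matrix (Fin 1) (Fin 1) R)) 0 0
      ((A'.adjugate * S)ᵀ))ᵀ
      = Matrix.fromBlocks (l • (1 : Matrix (Fin 1) (Fin 1) R)) 0 0 (A'.adjugate * S) := by
    rw [Matrix.fromBlocks_transpose, Matrix.transpose_smul, Matrix.transpose_one,
      Matrix.transpose_zero, Matrix.transpose_zero, Matrix.transpose_transpose]
  have hM : Matrix.fromBlocks a b c A'
        * Matrix.fromBlocks (l • (1 : Matrix (Fin 1) (Fin 1) R)) 0 0 (A'.adjugate * S)
      = Matrix.fromBlocks (a * (l • (1 : Matrix (Fin 1) (Fin 1) R)))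
        (b * (A'.adjugate * S)) (c * (l • (1 : Matrix (Fin 1) (Fin 1) R)))
        (A'.det • S) := by
    have hAS : A' * (A'.adjugate * S) = A'.det • S := by
      rw [← Matrix.mul_assoc, Matrix.mul_adjugate, Matrix.smul_mul, Matrix.one_mul]
    rw [Matrix.fromBlocks_multiply]
    simp only [Matrix.mul_zero, Matrix.zero_mul, add_zero, zero_add, hAS,
      Matrix.mul_assoc]
  have hoff : b * (A'.adjugate * S) = (c * (l • (1 : Matrix (Fin 1) (Fin 1) R)))ᵀ := by
    ext x j
    rw [Subsingleton.elim x 0]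
    have h1 : (b * (A'.adjugate * S)) 0 j = ∑ k, u k * S k j := by
      rw [← Matrix.mul_assoc, Matrix.mul_apply]
    have h2 : (∑ k, u k * S k j) = S.mulVec u j := by
      rw [Matrix.mulVec, dotProduct]
      refine Finset.sum_congr rfl (fun k _ => ?_)
      rw [hsym.apply j k, mul_comm]
    have h3 : (c * (l • (1 : Matrix (Fin 1) (Fin 1) R)))ᵀ 0 j = l * c j 0 := by
      rw [Matrix.transpose_apply, Matrix.mul_apply]
      simp [Matrix.one_apply, mul_comm]
    rw [h1, h2, h3, hSu]
    simp [hcv_def]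
  refine ⟨l, (A'.adjugate * S)ᵀ, hl, 1, 1, ?_, ?_, ?_, ?_⟩
  · rw [Matrix.det_one]; exact isUnit_one
  · rw [Matrix.det_one]; exact isUnit_one
  · rw [Matrix.one_mul, Matrix.mul_one, hBt, hM, Matrix.isSymm_fromBlocks_iff]
    refine ⟨?_, ?_, ?_, ?_⟩
    · show (a * (l • (1 : Matrix (Fin 1) (Fin 1) R)))ᵀ
        = a * (l • (1 : Matrix (Fin 1) (Fin 1) R))
      ext x y
      rw [Matrix.transpose_apply, Subsingleton.elim x y]
    · rw [hoff, Matrix.transpose_transpose]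
    · exact hoff.symm
    · show (A'.det • S)ᵀ = A'.det • S
      rw [Matrix.transpose_smul]
      exact congrArg _ hsym
  · rw [Matrix.one_mul, Matrix.mul_one, hBt, Matrix.det_mul]
    apply mem_nonZeroDivisors_of_ne_zero
    apply mul_ne_zero hA
    rw [Matrix.det_fromBlocks_zero₁₂, Matrix.det_mul, Matrix.det_adjugate,
      Matrix.det_smul, Matrix.det_one]
    apply mul_ne_zero
    · simpa using hl
    · exact mul_ne_zero (pow_ne_zero _ hA') hdetS
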